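/- There exist x, y, z in the field 𝔽₂((t⁻¹)) of formal Laurent series in t⁻¹ (the completion of 𝔽₂(t) at the place at infinity) such that y² + y·z + z² = f(x)·g(x). -/

import Mathlib

/-- The element `t` of `𝔽₂((t⁻¹))`: it is the inverse of the uniformizer `t⁻¹`, i.e. the
Laurent series (in `t⁻¹`) whose only term is `(t⁻¹)^(-1)`. -/
noncomputable def tLS : LaurentSeries (ZMod 2) := HahnSeries.single (-1 : ℤ) (1 : ZMod 2)

/-- `a = t⁴ + t³ + 1` viewed in `𝔽₂((t⁻¹))`. -/
noncomputable def aLS : LaurentSeries (ZMod 2) := tLS ^ 4 + tLS ^ 3 + 1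

/-- `b = t` viewed in `𝔽₂((t⁻¹))`. -/
noncomputable def bLS : LaurentSeries (ZMod 2) := tLS

/-- `f(x) = a⁻⁴·b·x² + x + a·b⁻¹` in `𝔽₂((t⁻¹))`. -/
noncomputable def fLS (x : LaurentSeries (ZMod 2)) : LaurentSeries (ZMod 2) :=
  aLS⁻¹ ^ 4 * bLS * x ^ 2 + x + aLS * bLS⁻¹

/-- `g(x) = a⁻⁸·b²·x² + a⁻⁴·b·x + a⁻³ + 1` in `𝔽₂((t⁻¹))`. -/
noncomputable def gLS (x : LaurentSeries (ZMod 2)) : LaurentSeries (ZMod 2) :=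
  aLS⁻¹ ^ 8 * bLS ^ 2 * x ^ 2 + aLS⁻¹ ^ 4 * bLS * x + aLS⁻¹ ^ 3 + 1

/-! ### Auxiliary material: solving Artin–Schreier equations in `𝔽₂[[X]]` -/

lemma zmod2_mul_self (x : ZMod 2) : x * x = x := by revert x; decide

lemma coeff_sq (w : PowerSeries (ZMod 2)) (n : ℕ) :
    PowerSeries.coeff (R := ZMod 2) n (w * w) =
      if 2 ∣ n then PowerSeries.coeff (R := ZMod 2) (n / 2) w else 0 := by
  rw [PowerSeries.coeff_mul]
  by_cases h : 2 ∣ n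
  · obtain ⟨m, rfl⟩ := h
    rw [if_pos ⟨m, rfl⟩]
    have hmem : ((m, m) : ℕ × ℕ) ∈ Finset.HasAntidiagonal.antidiagonal (2 * m) := by
      simp [two_mul]
    rw [← Finset.add_sum_erase _ _ hmem, zmod2_mul_self,
      Nat.mul_div_cancel_left m (by norm_num)]
    have hz : ∑ p ∈ (Finset.HasAntidiagonal.antidiagonal (2 * m)).erase (m, m),
        (PowerSeries.coeff (R := ZMod 2) p.1 w) * (PowerSeries.coeff (R := ZMod 2) p.2 w) = 0 := by
      refine Finset.sum_involution (fun p _ => p.swap) ?_ ?_ ?_ ?_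
      · intro p hp
        have : ∀ a b : ZMod 2, a * b + b * a = 0 := by decide
        exact this _ _
      · intro p hp _
        rw [Finset.mem_erase, Finset.HasAntidiagonal.mem_antidiagonal] at hp
        intro hs
        have h1 : p.1 = p.2 := by
          have := congrArg Prod.fst hs; simpa using this.symm
        apply hp.1
        have : p.1 = m := by omega
        have h2 : p.2 = m := by omega
        rw [Prod.ext_iff]; exact ⟨this, h2⟩
      · intro p hp
        rw [Finset.mem_erase, Finset.HasAntidiagonal.mem_antidiagonal] at hp
        rw [Finset.mem_erase, Finset.HasAntidiagonal.mem_antidiagonal]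
        constructor
        · intro hs
          apply hp.1
          have h1 : p.2 = m := by have := congrArg Prod.fst hs; simpa using this
          have h2 : p.1 = m := by have := congrArg Prod.snd hs; simpa using this
          rw [Prod.ext_iff]; exact ⟨h2, h1⟩
        · simpa [add_comm] using hp.2
      · intro p hp; rfl
    rw [hz, add_zero]
  · rw [if_neg h]
    refine Finset.sum_involution (fun p _ => p.swap) ?_ ?_ ?_ ?_
    · intro p hp
      have : ∀ a b : ZMod 2, a * b + b * a = 0 := by decide
      exact this _ _
    · intro p hp _
      rw [Finset.HasAntidiagonal.mem_antidiagonal] at hp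
      intro hs
      have h1 : p.1 = p.2 := by have := congrArg Prod.fst hs; simpa using this.symm
      exact h ⟨p.1, by omega⟩
    · intro p hp
      rw [Finset.HasAntidiagonal.mem_antidiagonal] at hp
      simp only [Finset.HasAntidiagonal.mem_antidiagonal, Prod.fst_swap, Prod.snd_swap]
      omega
    · intro p hp; rfl

/-- The coefficients of the solution of `w² + w = c` in `𝔽₂[[X]]` (for `c` with zero
constant coefficient), defined by the recursion forced by comparing coefficients. -/
noncomputable def Wfun (c : PowerSeries (ZMod 2)) : ℕ → ZMod 2
  | 0 => 0
  | (n+1) =>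
      PowerSeries.coeff (R := ZMod 2) (n+1) c +
        if 2 ∣ (n+1) then Wfun c ((n+1)/2) else 0
  decreasing_by exact Nat.div_lt_self (Nat.succ_pos n) one_lt_two

lemma Wfun_root (c : PowerSeries (ZMod 2))
    (hc : PowerSeries.constantCoeff (R := ZMod 2) c = 0) :
    (PowerSeries.mk (Wfun c)) ^ 2 + PowerSeries.mk (Wfun c) = c := by
  ext n
  rw [map_add, pow_two, coeff_sq, PowerSeries.coeff_mk]
  cases n with
  | zero =>
    simp only [Nat.zero_div, dvd_zero, if_true]
    rw [PowerSeries.coeff_mk]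
    show Wfun c 0 + Wfun c 0 = _
    rw [PowerSeries.coeff_zero_eq_constantCoeff, hc]
    simp [Wfun]
  | succ n =>
    by_cases h : 2 ∣ (n+1)
    · rw [if_pos h, PowerSeries.coeff_mk]
      show Wfun c ((n+1)/2) + Wfun c (n+1) = _
      rw [Wfun, if_pos h]
      have : ∀ a b : ZMod 2, a + (b + a) = b := by decide
      exact this _ _
    · rw [if_neg h, zero_add, PowerSeries.coeff_mk]
      show Wfun c (n+1) = _
      rw [Wfun, if_neg h, add_zero]

/-! ### Auxiliary material: identities in `𝔽₂((t⁻¹))` -/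

/-- The inclusion `𝔽₂[[X]] → 𝔽₂((t⁻¹))`, sending `X` to `t⁻¹`. -/
noncomputable abbrev φLS : PowerSeries (ZMod 2) →+* LaurentSeries (ZMod 2) :=
  HahnSeries.ofPowerSeries ℤ (ZMod 2)

/-- `P = 1 + X + X⁴`, so that `a = t⁴ · P(t⁻¹)`. -/
noncomputable def Pps : PowerSeries (ZMod 2) := 1 + PowerSeries.X + PowerSeries.X ^ 4

lemma ht : tLS ≠ 0 := HahnSeries.single_ne_zero one_ne_zero

lemma hXt : tLS * φLS PowerSeries.X = 1 := by
  rw [HahnSeries.ofPowerSeries_X, tLS, HahnSeries.single_mul_single]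
  norm_num

lemma hX_inv : φLS PowerSeries.X = tLS⁻¹ :=
  (inv_eq_of_mul_eq_one_right hXt).symm

lemma hPconst : PowerSeries.constantCoeff (R := ZMod 2) Pps ≠ 0 := by
  rw [Pps]; simp

lemma hPu : φLS Pps * φLS Pps⁻¹ = 1 := by
  rw [← map_mul, PowerSeries.mul_inv_cancel _ hPconst, map_one]

lemma haP : aLS = tLS ^ 4 * φLS Pps := by
  rw [aLS, Pps, map_add, map_add, map_one, map_pow, hX_inv]
  field_simp [ht]
  
lemma haU : aLS * (tLS⁻¹ ^ 4 * φLS Pps⁻¹) = 1 := by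
  rw [haP]
  calc tLS ^ 4 * φLS Pps * (tLS⁻¹ ^ 4 * φLS Pps⁻¹)
      = (tLS * tLS⁻¹) ^ 4 * (φLS Pps * φLS Pps⁻¹) := by ring
    _ = 1 := by rw [mul_inv_cancel₀ ht, hPu, one_pow, one_mul]

lemma hA : aLS ≠ 0 := left_ne_zero_of_mul_eq_one haU

lemma hAinv : aLS⁻¹ = tLS⁻¹ ^ 4 * φLS Pps⁻¹ := inv_eq_of_mul_eq_one_right haU

/-- `c = X¹²·P⁻³`, so that `c(t⁻¹) = a⁻³`. -/
noncomputable def cps : PowerSeries (ZMod 2) := PowerSeries.X ^ 12 * Pps⁻¹ ^ 3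

lemma hc0 : PowerSeries.constantCoeff (R := ZMod 2) cps = 0 := by
  rw [cps]; simp

lemma hφc : φLS cps = aLS⁻¹ ^ 3 := by
  rw [cps, map_mul, map_pow, map_pow, hX_inv, hAinv]
  ring

lemma char2LS (v : LaurentSeries (ZMod 2)) : v + v = 0 := by
  have h2 : (1 + 1 : LaurentSeries (ZMod 2)) = 0 := by
    have h1 : (HahnSeries.C (1 : ZMod 2) : LaurentSeries (ZMod 2)) = 1 := map_one _
    have e : (1 + 1 : ZMod 2) = 0 := by decide
    rw [← h1, ← map_add, e, map_zero]
  calc v + v = (1 + 1) * v := by ring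
    _ = 0 := by rw [h2, zero_mul]

lemma fLS_root (W : LaurentSeries (ZMod 2)) (hW : W ^ 2 + W = aLS⁻¹ ^ 3) :
    fLS (aLS ^ 4 * tLS⁻¹ * W) = 0 := by
  rw [fLS, bLS]
  have key : aLS⁻¹ ^ 4 * tLS * (aLS ^ 4 * tLS⁻¹ * W) ^ 2 + (aLS ^ 4 * tLS⁻¹ * W) + aLS * tLS⁻¹
      = aLS ^ 4 * tLS⁻¹ * (W ^ 2 + W) + aLS * tLS⁻¹ := by
    field_simp [ht, hA]
  rw [key, hW]
  have h2 : aLS ^ 4 * tLS⁻¹ * aLS⁻¹ ^ 3 = aLS * tLS⁻¹ := by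
    field_simp [ht, hA]
  rw [h2, char2LS]

/-- The equation `y² + yz + z² = f(x)g(x)` has a solution in `𝔽₂((t⁻¹))`, the completion of
`𝔽₂(t)` at the place at infinity. -/
theorem chatelet_solvable_at_infinity :
    ∃ x y z : LaurentSeries (ZMod 2), y ^ 2 + y * z + z ^ 2 = fLS x * gLS x := by
  have hW : (φLS (PowerSeries.mk (Wfun cps))) ^ 2 + φLS (PowerSeries.mk (Wfun cps))
      = aLS⁻¹ ^ 3 := by
    rw [← map_pow, ← map_add, Wfun_root cps hc0, hφc]
  refine ⟨aLS ^ 4 * tLS⁻¹ * φLS (PowerSeries.mk (Wfun cps)), 0, 0, ?_⟩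
  rw [fLS_root _ hW, zero_mul]
  ring
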